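/- Let H be a Hilbert space, P: H → H2 bounded linear with adjoint P*, g ∈ H2, and consider the linear ODE u'(t) = P*(g − P u(t)) with u(0) = u_ini. If PP* is invertible and P* P has an orthonormal eigenbasis decomposition, then u(t) converges as t → ∞ to P*(PP*)⁻¹(g − P u_ini) + u_ini. -/

import Mathlib

open Matrix Filter NormedSpace Set

private theorem exp_neg_tendsto_aux {M : ℕ} (B : Matrix (Fin M) (Fin M) ℝ) (hPD : B.PosDef) :
    Tendsto (fun t : ℝ => exp (t • (-B))) atTop (nhds 0) := by
  classical
  set V : Matrix (Fin M) (Fin M) ℝ := (hPD.1.eigenvectorUnitary : Matrix (Fin M) (Fin M) ℝ) with hV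
  have hVV : V * star V = 1 := Matrix.mem_unitaryGroup_iff.mp (hPD.1.eigenvectorUnitary).2
  have hVV' : star V * V = 1 := Matrix.mem_unitaryGroup_iff'.mp (hPD.1.eigenvectorUnitary).2
  have hVunit : IsUnit V := ⟨⟨V, star V, hVV, hVV'⟩, rfl⟩
  have hVinv : V⁻¹ = star V := Matrix.inv_eq_right_inv hVV
  set lam := hPD.1.eigenvalues with hlam
  have hspec : B = V * Matrix.diagonal lam * star V := by
    have := hPD.1.spectral_theorem
    simpa using this
  have hrep : ∀ t : ℝ, exp (t • (-B)) =
      V * Matrix.diagonal (fun i => Real.exp (t * (-lam i))) * star V := by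
    intro t
    have hdg : (Matrix.diagonal fun i => t * -lam i) = t • -Matrix.diagonal lam := by
      ext i j
      rcases eq_or_ne i j with rfl | h
      · simp [Matrix.smul_apply, Matrix.neg_apply]
      · simp [Matrix.diagonal_apply_ne _ h, Matrix.smul_apply, Matrix.neg_apply]
    have h1 : t • (-B) = V * Matrix.diagonal (fun i => t * (-lam i)) * V⁻¹ := by
      rw [hVinv, hspec, hdg]
      simp only [mul_smul_comm, smul_mul_assoc, mul_neg, neg_mul, smul_neg, neg_neg]
    rw [h1, Matrix.exp_conj V _ hVunit, hVinv, Matrix.exp_diagonal, Pi.exp_def]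
    congr 1
    congr 1
    funext i
    rw [← Real.exp_eq_exp_ℝ]
  rw [funext hrep]
  have h0 : Tendsto (fun t : ℝ => (fun i => Real.exp (t * (-lam i)) : Fin M → ℝ)) atTop
      (nhds 0) := by
    rw [tendsto_pi_nhds]
    intro i
    have hneg : -lam i < 0 := neg_neg_iff_pos.mpr (hPD.eigenvalues_pos i)
    exact Real.tendsto_exp_atBot.comp (tendsto_id.atTop_mul_const_of_neg hneg)
  have hd : Tendsto (fun t : ℝ => (Matrix.diagonal (fun i => Real.exp (t * (-lam i))) :
      Matrix (Fin M) (Fin M) ℝ)) atTop (nhds 0) := by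
    rw [show (0 : Matrix (Fin M) (Fin M) ℝ) = Matrix.diagonal (fun _ : Fin M => (0:ℝ)) from
      Matrix.diagonal_zero.symm]
    exact ((continuous_id.matrix_diagonal (R := ℝ) (n := Fin M)).tendsto (0 : Fin M → ℝ)).comp h0
  have := ((tendsto_const_nhds (x := V)).mul hd).mul (tendsto_const_nhds (x := star V))
  simpa using this

/-- Finite-dimensional case: the gradient-flow ODE u' = Pᵀ(g − Pu), u(0) = u_ini,
with P of full row rank (PPᵀ invertible), converges as t → ∞ to
Pᵀ(PPᵀ)⁻¹(g − P u_ini) + u_ini. -/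
theorem stmt_5 {n M : ℕ}
    (P : Matrix (Fin M) (Fin n) ℝ)
    (hP : IsUnit (P * Pᵀ))
    (g : Fin M → ℝ) (uini : Fin n → ℝ)
    (u : ℝ → Fin n → ℝ)
    (hu0 : u 0 = uini)
    (hode : ∀ t : ℝ, HasDerivAt u (Pᵀ *ᵥ (g - P *ᵥ u t)) t) :
    Tendsto u atTop (nhds (Pᵀ *ᵥ ((P * Pᵀ)⁻¹ *ᵥ (g - P *ᵥ uini)) + uini)) := by
  classical
  letI : SeminormedRing (Matrix (Fin M) (Fin M) ℝ) := Matrix.linftyOpSemiNormedRing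
  letI : NormedRing (Matrix (Fin M) (Fin M) ℝ) := Matrix.linftyOpNormedRing
  letI : NormedAlgebra ℝ (Matrix (Fin M) (Fin M) ℝ) := Matrix.linftyOpNormedAlgebra
  set B : Matrix (Fin M) (Fin M) ℝ := P * Pᵀ with hB
  have hdet : IsUnit B.det := (Matrix.isUnit_iff_isUnit_det _).mp hP
  have hBB : B * B⁻¹ = 1 := Matrix.mul_nonsing_inv _ hdet
  -- positive definiteness of B
  have hPD : B.PosDef := by
    have hPSD : B.PosSemidef := by
      have := Matrix.posSemidef_self_mul_conjTranspose P
      rwa [Matrix.conjTranspose_eq_transpose_of_trivial] at this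
    refine Matrix.PosDef.of_dotProduct_mulVec_pos hPSD.isHermitian fun x hx => ?_
    have hy : Pᵀ *ᵥ x ≠ 0 := by
      intro h
      apply hx
      have hBx : B *ᵥ x = 0 := by
        rw [hB, ← Matrix.mulVec_mulVec, h, Matrix.mulVec_zero]
      exact (Matrix.mulVec_injective_iff_isUnit.mpr hP) (a₁ := x) (a₂ := 0) (by simpa using hBx)
    have hdot : star x ⬝ᵥ B *ᵥ x = (Pᵀ *ᵥ x) ⬝ᵥ (Pᵀ *ᵥ x) := by
      rw [hB, ← Matrix.mulVec_mulVec, star_trivial, Matrix.dotProduct_mulVec x P,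
        ← Matrix.mulVec_transpose]
    rw [hdot]
    have := Matrix.dotProduct_star_self_pos_iff (v := Pᵀ *ᵥ x) |>.mpr hy
    simpa using this
  -- explicit solution
  set d : Fin M → ℝ := g - P *ᵥ uini with hd
  set c : Fin n → ℝ := Pᵀ *ᵥ (B⁻¹ *ᵥ d) + uini with hc
  let F₀ : Matrix (Fin M) (Fin M) ℝ →ₗ[ℝ] (Fin n → ℝ) :=
    { toFun := fun X => Pᵀ *ᵥ (X *ᵥ (B⁻¹ *ᵥ d))
      map_add' := fun X Y => by
        simp only [Matrix.add_mulVec, Matrix.mulVec_add]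
      map_smul' := fun r X => by
        simp only [Matrix.smul_mulVec, Matrix.mulVec_smul, RingHom.id_apply] }
  let F : Matrix (Fin M) (Fin M) ℝ →L[ℝ] (Fin n → ℝ) := F₀.toContinuousLinearMap
  have hF : ∀ X, F X = Pᵀ *ᵥ (X *ᵥ (B⁻¹ *ᵥ d)) := fun X => rfl
  set E : ℝ → Matrix (Fin M) (Fin M) ℝ := fun t => exp (t • (-B)) with hE
  set w : ℝ → Fin n → ℝ := fun t => c - F (E t) with hw
  have hcomm : ∀ t, B * E t = E t * B := fun t =>
    ((((Commute.refl B).neg_right).smul_right t).exp_right)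
  have hEB : ∀ t, (E t * B) *ᵥ (B⁻¹ *ᵥ d) = E t *ᵥ d := by
    intro t
    rw [Matrix.mulVec_mulVec, mul_assoc, hBB, mul_one]
  have hw0 : w 0 = uini := by
    have hE0 : E 0 = 1 := by rw [hE]; simp [exp_zero]
    rw [hw]
    simp only [hE0, hF, Matrix.one_mulVec, hc]
    abel
  have hwderiv : ∀ t, HasDerivAt w (Pᵀ *ᵥ (g - P *ᵥ w t)) t := by
    intro t
    have hEd : HasDerivAt E (E t * (-B)) t := hasDerivAt_exp_smul_const (-B) t
    have h1 : HasDerivAt (fun s => F (E s)) (F (E t * (-B))) t :=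
      F.hasFDerivAt.comp_hasDerivAt t hEd
    have h2 : HasDerivAt w (-(F (E t * (-B)))) t := h1.const_sub c
    have hgw : g - P *ᵥ w t = E t *ᵥ d := by
      have hPc : P *ᵥ c = g := by
        rw [hc, Matrix.mulVec_add, Matrix.mulVec_mulVec, ← hB, Matrix.mulVec_mulVec, hBB,
          Matrix.one_mulVec, hd]
        abel
      rw [hw]
      simp only [Matrix.mulVec_sub, hPc, hF]
      rw [Matrix.mulVec_mulVec, ← hB, Matrix.mulVec_mulVec, hcomm t, hEB t]
      abel
    have h3 : -(F (E t * (-B))) = Pᵀ *ᵥ (g - P *ᵥ w t) := by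
      rw [hgw, hF, mul_neg, Matrix.neg_mulVec, Matrix.mulVec_neg, neg_neg, hEB t]
    rw [← h3]
    exact h2
  -- uniqueness
  let L : (Fin n → ℝ) →L[ℝ] (Fin n → ℝ) := LinearMap.toContinuousLinearMap ((Pᵀ * P).mulVecLin)
  have hfield : ∀ x : Fin n → ℝ, Pᵀ *ᵥ (g - P *ᵥ x) = Pᵀ *ᵥ g - L x := by
    intro x
    rw [Matrix.mulVec_sub]
    congr 1
    rw [Matrix.mulVec_mulVec]
    rfl
  have hlip : ∀ t : ℝ, LipschitzWith ‖L‖₊ (fun x : Fin n → ℝ => Pᵀ *ᵥ g - L x) := by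
    intro t
    refine LipschitzWith.of_dist_le_mul fun x y => ?_
    rw [dist_eq_norm, show (Pᵀ *ᵥ g - L x) - (Pᵀ *ᵥ g - L y) = L y - L x by abel, ← dist_eq_norm,
      dist_comm]
    exact L.lipschitz.dist_le_mul x y
  have huw : ∀ t : ℝ, 0 ≤ t → u t = w t := by
    intro b hb
    have key := ODE_solution_unique (v := fun _ x => Pᵀ *ᵥ g - L x) (K := ‖L‖₊) hlip
      (f := u) (g := w) (a := 0) (b := b)
      (fun t _ => (hode t).continuousAt.continuousWithinAt)
      (fun t _ => by
        have := (hode t).hasDerivWithinAt (s := Ici t)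
        rwa [hfield (u t)] at this)
      (fun t _ => (hwderiv t).continuousAt.continuousWithinAt)
      (fun t _ => by
        have := (hwderiv t).hasDerivWithinAt (s := Ici t)
        rwa [hfield (w t)] at this)
      (by rw [hu0, hw0])
    exact key ⟨hb, le_refl b⟩
  -- limit
  have hlim : Tendsto w atTop (nhds c) := by
    have hE0 : Tendsto E atTop (nhds 0) := exp_neg_tendsto_aux B hPD
    have : Tendsto (fun t => F (E t)) atTop (nhds (F 0)) := (F.continuous.tendsto 0).comp hE0
    have h := (tendsto_const_nhds (x := c)).sub this
    simpa using h
  have hfinal : Tendsto u atTop (nhds c) := by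
    refine hlim.congr' ?_
    filter_upwards [eventually_ge_atTop (0 : ℝ)] with t ht
    exact (huw t ht).symm
  exact hfinal
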